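/- Let X be a Banach space, F ∈ 𝓕_X, t > 0, and Φ ⊂ X a set. Assume there is an increasing sequence (g_k) of natural numbers such that the norm limit lim_{k→∞} F(t/g_k)^{[g_k s]} g exists for every g ∈ Φ and every nonnegative rational s. Then this limit exists for every g in the closed linear span of Φ and every real s ≥ 0, and the operators T_s g := lim_{k→∞} F(t/g_k)^{[g_k s/t]} g on the closed span of Φ satisfy: (a) if T_s f lies in the closed span of Φ for some s ≥ 0, then T_{s+l} f = T_l T_s f for all l > 0; (b) if f lies in the closed span of Φ, f ∈ D(closure of F'(0)), (closure of F'(0))f lies in the closed span of Φ, and there is a sequence (f_n) in (closed span of Φ) ∩ D(F'(0)) with f_n → f and F'(0)f_n → (closure of F'(0))f, then d/ds(T_s f) = T_s (closure of F'(0)) f for all s ≥ 0; (c) if for some s ≥ 0 one has T_s f in (closed span of Φ) ∩ D(closure of F'(0)), f ∈ (closed span of Φ) ∩ D(F'(0)), both (closure of F'(0)) T_s f and F'(0) f in the closed span of Φ, and there is a sequence (f_n) in (closed span of Φ) ∩ D(F'(0)) with f_n → T_s f and F'(0)f_n → (closure of F'(0)) T_s f, then d/ds(T_s f) = (closure of F'(0))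 T_s f. -/

import Mathlib

open Filter Topology MeasureTheory

noncomputable section

variable {X : Type*} [NormedAddCommGroup X] [NormedSpace ℝ X] [CompleteSpace X]

/-- `y` is the value of the strong derivative at `0` of `F : [0,∞) → L(X)` at `ψ`. -/
def DerivAtZero (F : ℝ → (X →L[ℝ] X)) (ψ y : X) : Prop :=
  Tendsto (fun h : ℝ => h⁻¹ • (F h ψ - F 0 ψ)) (𝓝[>] (0 : ℝ)) (𝓝 y)

/-- The class `𝓕^X_{M,a}`. -/
def MemFClass (F : ℝ → (X →L[ℝ] X)) (M a : ℝ) : Prop :=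
  F 0 = 1 ∧
    (∀ n m : ℕ, 0 < n → 0 < m → ∀ s : ℝ, 0 ≤ s →
      ‖(F (s / n)) ^ m‖ ≤ M * Real.exp (a * m * s / n)) ∧
    Dense {ψ : X | ∃ y, DerivAtZero F ψ y}

/-- The class `𝓕_X`. -/
def MemF (F : ℝ → (X →L[ℝ] X)) : Prop := ∃ M, 1 ≤ M ∧ ∃ a : ℝ, MemFClass F M a

/-- The adjoint of a bounded operator, acting on the dual space. -/
noncomputable def adjCLM (T : X →L[ℝ] X) :
    StrongDual ℝ X →L[ℝ] StrongDual ℝ X :=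
  LinearMap.mkContinuous
    { toFun := fun φ => φ.comp T
      map_add' := fun φ ψ => by ext x; simp
      map_smul' := fun c φ => by ext x; simp }
    ‖T‖ (fun φ => by simpa [mul_comm] using φ.opNorm_comp_le T)

/-- `ψ` is the value at `φ` of the strong derivative at `0` of `s ↦ F(s)*`. -/
def AdjDerivAtZero (F : ℝ → (X →L[ℝ] X)) (φ ψ : StrongDual ℝ X) : Prop :=
  Tendsto (fun h : ℝ => h⁻¹ • (adjCLM (F h) φ - adjCLM (F 0) φ)) (𝓝[>] (0 : ℝ)) (𝓝 ψ)

/-- A `C₀`-semigroup on `X` (as a function on `[0,∞)`, modelled on all of `ℝ`). -/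
def IsC0Semigroup (S : ℝ → (X →L[ℝ] X)) : Prop :=
  S 0 = 1 ∧ (∀ a b : ℝ, 0 ≤ a → 0 ≤ b → S (a + b) = S a * S b) ∧
    (∀ x : X, ContinuousOn (fun s => S s x) (Set.Ici (0 : ℝ))) ∧
    ∃ M, 1 ≤ M ∧ ∃ w : ℝ, ∀ s : ℝ, 0 ≤ s → ‖S s‖ ≤ M * Real.exp (w * s)

/-- `Z` is the generator of the semigroup `S`: the strong derivative of `S` at `0`,
with its maximal domain, coincides with `Z`. -/
def IsGeneratorOf (S : ℝ → (X →L[ℝ] X)) (Z : X →ₗ.[ℝ] X) : Prop :=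
  ∀ x y : X, DerivAtZero S x y ↔ ∃ hx : x ∈ Z.domain, Z ⟨x, hx⟩ = y

/-- Every subsequence of `u` has a weakly convergent subsubsequence. -/
def WeakSubCvg (u : ℕ → X) : Prop :=
  ∀ k : ℕ → ℕ, StrictMono k → ∃ j : ℕ → ℕ, StrictMono j ∧ ∃ L : X,
    ∀ φ : StrongDual ℝ X, Tendsto (fun i => φ (u (k (j i)))) atTop (𝓝 (φ L))

/-- `(f, y)` belongs to the closure of the graph of `F'(0)`. -/
def InClosureGraphF (F : ℝ → (X →L[ℝ] X)) (f y : X) : Prop :=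
  (f, y) ∈ closure {p : X × X | DerivAtZero F p.1 p.2}

/-- The closed linear span of a set. -/
def closedSpan (Φ : Set X) : Submodule ℝ X := (Submodule.span ℝ Φ).topologicalClosure


section AuxChernoff
set_option linter.unusedSectionVars false
omit [CompleteSpace X]

/-- Discrete Duhamel-type estimate. -/
lemma key_pow_est (P : X →L[ℝ] X) (x z : X) (C E : ℝ) :
    ∀ d : ℕ, (∀ j, j ≤ d → ‖(P^j : X →L[ℝ] X)‖ ≤ C) →
      (∀ j, j ≤ d → ‖(P^j) z - z‖ ≤ E) →
      ‖(P^d) x - x - (d:ℝ) • z‖ ≤ d * (C * ‖P x - x - z‖ + E) := by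
  intro d
  induction d with
  | zero => intro _ _; simp
  | succ d ih =>
    intro hC hE
    have h1 : ‖(P^d) x - x - (d:ℝ) • z‖ ≤ d * (C * ‖P x - x - z‖ + E) :=
      ih (fun j hj => hC j (hj.trans (Nat.le_succ d))) (fun j hj => hE j (hj.trans (Nat.le_succ d)))
    have key : (P^(d+1)) x - x - ((d+1:ℕ):ℝ) • z
        = ((P^d) x - x - (d:ℝ) • z) + (P^d) (P x - x - z) + ((P^d) z - z) := by
      have hPd : (P^(d+1)) x = (P^d) (P x) := by
        rw [pow_succ]; rfl
      simp only [Nat.cast_add, Nat.cast_one]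
      rw [hPd, map_sub, map_sub]
      abel_nf
      rw [add_smul, one_smul]
      abel
    rw [key]
    have h2 : ‖(P^d) (P x - x - z)‖ ≤ C * ‖P x - x - z‖ := by
      calc ‖(P^d) (P x - x - z)‖ ≤ ‖(P^d : X →L[ℝ] X)‖ * ‖P x - x - z‖ := (P^d).le_opNorm _
        _ ≤ C * ‖P x - x - z‖ := by
          exact mul_le_mul_of_nonneg_right (hC d (Nat.le_succ d)) (norm_nonneg _)
    have h3 : ‖(P^d) z - z‖ ≤ E := hE d (Nat.le_succ d)
    calc ‖((P^d) x - x - (d:ℝ) • z) + (P^d) (P x - x - z) + ((P^d) z - z)‖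
        ≤ ‖(P^d) x - x - (d:ℝ) • z‖ + ‖(P^d) (P x - x - z)‖ + ‖(P^d) z - z‖ :=
          norm_add₃_le
      _ ≤ d * (C * ‖P x - x - z‖ + E) + C * ‖P x - x - z‖ + E := by
          gcongr
      _ = ((d+1:ℕ):ℝ) * (C * ‖P x - x - z‖ + E) := by push_cast; ring

lemma pow_sub_one_est (P : X →L[ℝ] X) (x : X) (C : ℝ) (d : ℕ)
    (hC : ∀ j, j ≤ d → ‖(P^j : X →L[ℝ] X)‖ ≤ C) :
    ‖(P^d) x - x‖ ≤ d * (C * ‖P x - x‖) := by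
  have := key_pow_est P x 0 C 0 d hC (fun j _ => by simp)
  simpa using this

lemma key_pow_est2 (P : X →L[ℝ] X) (x w : X) (τ C ε₁ ε₂ : ℝ) (m d : ℕ)
    (hτ : 0 ≤ τ)
    (hC : ∀ j, j ≤ m + d → ‖(P^j : X →L[ℝ] X)‖ ≤ C)
    (h1 : ‖P x - x - τ • w‖ ≤ τ * ε₁)
    (h2 : ∀ j, j ≤ d → ‖(P^j) w - w‖ ≤ ε₂) :
    ‖(P^(m+d)) x - (P^m) x - ((d:ℝ)*τ) • ((P^m) w)‖ ≤ C * ((d:ℝ)*τ) * (C*ε₁ + ε₂) := by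
  have hid : (P^(m+d)) x - (P^m) x - ((d:ℝ)*τ) • ((P^m) w)
      = (P^m) ((P^d) x - x - (d:ℝ) • (τ • w)) := by
    rw [map_sub, map_sub, _root_.map_smul, _root_.map_smul]
    rw [show (P^(m+d)) x = (P^m) ((P^d) x) by rw [pow_add]; rfl]
    rw [smul_smul, mul_comm]
  have hkey : ‖(P^d) x - x - (d:ℝ) • (τ • w)‖ ≤ d * (C * ‖P x - x - τ • w‖ + τ * ε₂) := by
    apply key_pow_est P x (τ • w) C (τ * ε₂) d (fun j hj => hC j (le_add_left hj))
    intro j hj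
    rw [_root_.map_smul, ← smul_sub, norm_smul, Real.norm_eq_abs, abs_of_nonneg hτ]
    exact mul_le_mul_of_nonneg_left (h2 j hj) hτ
  have hCd : ‖(P^m : X →L[ℝ] X)‖ ≤ C := hC m (Nat.le_add_right m d)
  have hC0 : (0:ℝ) ≤ C := le_trans (norm_nonneg _) hCd
  calc ‖(P^(m+d)) x - (P^m) x - ((d:ℝ)*τ) • ((P^m) w)‖
      = ‖(P^m) ((P^d) x - x - (d:ℝ) • (τ • w))‖ := by rw [hid]
    _ ≤ ‖(P^m : X →L[ℝ] X)‖ * ‖(P^d) x - x - (d:ℝ) • (τ • w)‖ := (P^m).le_opNorm _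
    _ ≤ C * (d * (C * ‖P x - x - τ • w‖ + τ * ε₂)) := by
        apply mul_le_mul hCd hkey (norm_nonneg _) hC0
    _ ≤ C * (d * (C * (τ * ε₁) + τ * ε₂)) := by
        gcongr
    _ = C * ((d:ℝ)*τ) * (C*ε₁ + ε₂) := by ring

lemma cauchySeq_of_approx {u : ℕ → X}
    (h : ∀ ε : ℝ, 0 < ε → ∃ v : ℕ → X, CauchySeq v ∧ ∀ᶠ k in atTop, ‖u k - v k‖ ≤ ε) :
    CauchySeq u := by
  rw [Metric.cauchySeq_iff]
  intro ε hε
  obtain ⟨v, hv, hclose⟩ := h (ε/4) (by linarith)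
  obtain ⟨K1, hK1⟩ := eventually_atTop.1 hclose
  obtain ⟨K2, hK2⟩ := Metric.cauchySeq_iff.1 hv (ε/4) (by linarith)
  refine ⟨max K1 K2, fun m hm n hn => ?_⟩
  have h1 := hK1 m (le_trans (le_max_left _ _) hm)
  have h2 := hK1 n (le_trans (le_max_left _ _) hn)
  have h3 := hK2 m (le_trans (le_max_right _ _) hm) n (le_trans (le_max_right _ _) hn)
  calc dist (u m) (u n) ≤ dist (u m) (v m) + dist (v m) (v n) + dist (v n) (u n) :=
        dist_triangle4 _ _ _ _
    _ < ε/4 + ε/4 + ε/4 := by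
        have e1 : dist (u m) (v m) = ‖u m - v m‖ := dist_eq_norm _ _
        have e3 : dist (v n) (u n) = ‖u n - v n‖ := by rw [dist_eq_norm, norm_sub_rev]
        rw [e1, e3]
        linarith
    _ < ε := by linarith

lemma nat_floor_add_le {x y : ℝ} (hx : 0 ≤ x) (hy : 0 ≤ y) :
    ⌊x⌋₊ + ⌊y⌋₊ ≤ ⌊x+y⌋₊ ∧ ⌊x+y⌋₊ ≤ ⌊x⌋₊ + ⌊y⌋₊ + 1 := by
  constructor
  · apply Nat.le_floor
    push_cast
    exact add_le_add (Nat.floor_le hx) (Nat.floor_le hy)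
  · rw [Nat.lt_succ_iff.symm, Nat.lt_iff_add_one_le] at *
    have : x + y < ((⌊x⌋₊ + ⌊y⌋₊ + 1 + 1 : ℕ) : ℝ) := by
      push_cast
      have h1 := Nat.lt_floor_add_one x
      have h2 := Nat.lt_floor_add_one y
      linarith
    have := Nat.floor_lt (by positivity) |>.2 this
    omega

lemma tendsto_nat_cast_strictMono {gk : ℕ → ℕ} (hgk : StrictMono gk) :
    Tendsto (fun k => (gk k : ℝ)) atTop atTop :=
  tendsto_natCast_atTop_atTop.comp hgk.tendsto_atTop

lemma tendsto_t_div_gk {gk : ℕ → ℕ} (hgk : StrictMono gk) (t : ℝ) :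
    Tendsto (fun k => t / (gk k : ℝ)) atTop (𝓝 0) :=
  Tendsto.div_atTop tendsto_const_nhds (tendsto_nat_cast_strictMono hgk)

lemma floor_mul_div_tendsto (t : ℝ) (ht : 0 < t) {gk : ℕ → ℕ} (hgk : StrictMono gk)
    (w : ℝ) (hw : 0 ≤ w) :
    Tendsto (fun k => (⌊(gk k:ℝ)*(w/t)⌋₊ : ℝ) * (t/(gk k:ℝ))) atTop (𝓝 w) := by
  have hlow : Tendsto (fun k => w - t/(gk k:ℝ)) atTop (𝓝 w) := by
    have := (tendsto_t_div_gk hgk t).const_sub w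
    simpa using this
  apply tendsto_of_tendsto_of_tendsto_of_le_of_le' hlow tendsto_const_nhds
  · filter_upwards [eventually_ge_atTop 1] with k hk
    have hNpos : (0:ℝ) < (gk k : ℝ) := by
      have := hgk.le_apply (x := k)
      have : 1 ≤ gk k := le_trans hk this
      exact_mod_cast Nat.pos_of_ne_zero (by omega)
    have h1 : (gk k:ℝ)*(w/t) - 1 < (⌊(gk k:ℝ)*(w/t)⌋₊ : ℝ) := by
      have := Nat.lt_floor_add_one ((gk k:ℝ)*(w/t))
      linarith
    have htN : 0 < t/(gk k:ℝ) := div_pos ht hNpos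
    have := mul_le_mul_of_nonneg_right h1.le htN.le
    calc w - t/(gk k:ℝ) = ((gk k:ℝ)*(w/t) - 1) * (t/(gk k:ℝ)) := by
          field_simp
        _ ≤ (⌊(gk k:ℝ)*(w/t)⌋₊ : ℝ) * (t/(gk k:ℝ)) := this
  · filter_upwards [eventually_ge_atTop 1] with k hk
    have hNpos : (0:ℝ) < (gk k : ℝ) := by
      have := hgk.le_apply (x := k)
      have : 1 ≤ gk k := le_trans hk this
      exact_mod_cast Nat.pos_of_ne_zero (by omega)
    have h1 : (⌊(gk k:ℝ)*(w/t)⌋₊ : ℝ) ≤ (gk k:ℝ)*(w/t) :=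
      Nat.floor_le (by positivity)
    have htN : 0 < t/(gk k:ℝ) := div_pos ht hNpos
    calc (⌊(gk k:ℝ)*(w/t)⌋₊ : ℝ) * (t/(gk k:ℝ)) ≤ ((gk k:ℝ)*(w/t)) * (t/(gk k:ℝ)) :=
          mul_le_mul_of_nonneg_right h1 htN.le
      _ = w := by field_simp


lemma derivAtZero_est (F : ℝ → (X →L[ℝ] X)) (hF0 : F 0 = 1) {ψ y : X}
    (h : DerivAtZero F ψ y) {ε : ℝ} (hε : 0 < ε) :
    ∃ η, 0 < η ∧ ∀ r : ℝ, 0 < r → r < η → ‖F r ψ - ψ - r • y‖ ≤ r * ε := by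
  rw [DerivAtZero, Metric.tendsto_nhdsWithin_nhds] at h
  obtain ⟨δ, hδ, hh⟩ := h ε hε
  refine ⟨δ, hδ, fun r hr hrδ => ?_⟩
  have h2 := hh (Set.mem_Ioi.2 hr) (by rw [Real.dist_eq, sub_zero, abs_of_pos hr]; exact hrδ)
  rw [dist_eq_norm] at h2
  have key : F r ψ - ψ - r • y = r • (r⁻¹ • (F r ψ - F 0 ψ) - y) := by
    rw [hF0, smul_sub, smul_smul, mul_inv_cancel₀ hr.ne', one_smul]
    simp
  rw [key, norm_smul, Real.norm_eq_abs, abs_of_pos hr]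
  exact mul_le_mul_of_nonneg_left h2.le hr.le

end AuxChernoff

set_option maxHeartbeats 2000000 in
/-- Lemma 7: extension of the norm limits from `Φ` and nonnegative rational
times to the closed span of `Φ` and all real `s ≥ 0`, together with properties (a)–(c). -/
theorem chernoff_lemma7 (F : ℝ → (X →L[ℝ] X)) (hF : MemF F)
    (t : ℝ) (ht : 0 < t) (Φ : Set X)
    (gk : ℕ → ℕ) (hgk : StrictMono gk)
    (hlim : ∀ g ∈ Φ, ∀ q : ℚ, 0 ≤ (q : ℝ) →
      ∃ L : X, Tendsto (fun k : ℕ => ((F (t / (gk k))) ^ ⌊(gk k : ℝ) * (q : ℝ)⌋₊) g)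
        atTop (𝓝 L)) :
    -- the limit exists on the closed span for all real `s ≥ 0`
    (∀ g ∈ closedSpan Φ, ∀ s : ℝ, 0 ≤ s →
      ∃ L : X, Tendsto (fun k : ℕ => ((F (t / (gk k))) ^ ⌊(gk k : ℝ) * s⌋₊) g) atTop (𝓝 L)) ∧
    -- properties of the limit family `T_s`
    (∀ T : ℝ → X → X,
      (∀ s : ℝ, 0 ≤ s → ∀ g ∈ closedSpan Φ,
        Tendsto (fun k : ℕ => ((F (t / (gk k))) ^ ⌊(gk k : ℝ) * (s / t)⌋₊) g)
          atTop (𝓝 (T s g))) →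
      -- (a) semigroup-type identity
      (∀ f ∈ closedSpan Φ, ∀ s : ℝ, 0 ≤ s → T s f ∈ closedSpan Φ →
        ∀ l : ℝ, 0 < l → T (s + l) f = T l (T s f)) ∧
      -- (b) differentiability along an approximating sequence
      (∀ f ∈ closedSpan Φ, ∀ y : X, y ∈ closedSpan Φ →
        (∃ fn yn : ℕ → X,
          (∀ n : ℕ, fn n ∈ closedSpan Φ ∧ DerivAtZero F (fn n) (yn n)) ∧
          Tendsto fn atTop (𝓝 f) ∧ Tendsto yn atTop (𝓝 y)) →
        ∀ s : ℝ, 0 ≤ s →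
          HasDerivWithinAt (fun r => T r f) (T s y) (Set.Ici (0 : ℝ)) s) ∧
      -- (c) the derivative hits the closure of `F'(0)` at `T_s f`
      (∀ f ∈ closedSpan Φ, ∀ yf : X, DerivAtZero F f yf → yf ∈ closedSpan Φ →
        ∀ s : ℝ, 0 ≤ s → T s f ∈ closedSpan Φ →
        ∀ y' : X, y' ∈ closedSpan Φ →
        (∃ fn yn : ℕ → X,
          (∀ n : ℕ, fn n ∈ closedSpan Φ ∧ DerivAtZero F (fn n) (yn n)) ∧
          Tendsto fn atTop (𝓝 (T s f)) ∧ Tendsto yn atTop (𝓝 y')) →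
        HasDerivWithinAt (fun r => T r f) y' (Set.Ici (0 : ℝ)) s)) := by
  obtain ⟨M, hM, a, hF0, hbound, hdense⟩ := hF
  have hM0 : (0:ℝ) ≤ M := le_trans zero_le_one hM
  have hdivle : ∀ (c e : ℝ), 0 < c → 0 < e → c * (e/(c+1)) ≤ e := by
    intro c e hc he
    have h5 : c/(c+1) ≤ 1 := (div_le_one (by linarith)).2 (by linarith)
    calc c * (e/(c+1)) = e * (c/(c+1)) := by ring
      _ ≤ e * 1 := mul_le_mul_of_nonneg_left h5 he.le
      _ = e := mul_one e
  have hNk : ∀ k : ℕ, 1 ≤ k → (1:ℝ) ≤ (gk k : ℝ) := by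
    intro k hk
    exact_mod_cast le_trans hk (hgk.le_apply (x := k))
  have hτ0 : Tendsto (fun k => t / (gk k : ℝ)) atTop (𝓝 0) := tendsto_t_div_gk hgk t
  -- uniform operator norm bound
  have hpow : ∀ (k : ℕ), 1 ≤ k → ∀ (m : ℕ) (b : ℝ), 0 ≤ b → (m:ℝ) * t ≤ (gk k : ℝ) * b →
      ‖((F (t / (gk k : ℝ)))^m : X →L[ℝ] X)‖ ≤ M * Real.exp (|a| * b) := by
    intro k hk m b hb hmb
    have hN1 : (1:ℝ) ≤ (gk k:ℝ) := hNk k hk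
    have hNpos : (0:ℝ) < (gk k:ℝ) := lt_of_lt_of_le zero_lt_one hN1
    rcases Nat.eq_zero_or_pos m with hm | hm
    · subst hm
      simp only [pow_zero]
      have h1 : ‖(1 : X →L[ℝ] X)‖ ≤ 1 := by
        rw [ContinuousLinearMap.one_def]; exact ContinuousLinearMap.norm_id_le
      have h2 : (1:ℝ) ≤ M * Real.exp (|a| * b) := by
        have := Real.one_le_exp (show (0:ℝ) ≤ |a| * b by positivity)
        nlinarith
      linarith
    · have hNnat : 0 < gk k := by exact_mod_cast hNpos
      refine le_trans (hbound (gk k) m hNnat hm t ht.le) ?_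
      have key : a * m * t / (gk k:ℝ) ≤ |a| * b := by
        have hx : (m:ℝ) * t / (gk k:ℝ) ≤ b := (div_le_iff₀ hNpos).2 (by nlinarith)
        have h1 : a * m * t / (gk k:ℝ) = a * ((m:ℝ)*t/(gk k:ℝ)) := by ring
        have h2 : a * ((m:ℝ)*t/(gk k:ℝ)) ≤ |a| * ((m:ℝ)*t/(gk k:ℝ)) :=
          mul_le_mul_of_nonneg_right (le_abs_self a) (by positivity)
        have h3 : |a| * ((m:ℝ)*t/(gk k:ℝ)) ≤ |a| * b :=
          mul_le_mul_of_nonneg_left hx (abs_nonneg a)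
        linarith
      exact mul_le_mul_of_nonneg_left (Real.exp_le_exp.2 key) hM0
  have hpow' : ∀ (k : ℕ), 1 ≤ k → ∀ (m : ℕ) (b : ℝ), 0 ≤ b → (m:ℝ) * t ≤ (gk k : ℝ) * b →
      ∀ x : X, ‖((F (t / (gk k : ℝ)))^m) x‖ ≤ M * Real.exp (|a| * b) * ‖x‖ := by
    intro k hk m b hb hmb x
    exact le_trans (((F (t / (gk k:ℝ)))^m).le_opNorm x)
      (mul_le_mul_of_nonneg_right (hpow k hk m b hb hmb) (norm_nonneg _))
  -- equicontinuity on the domain of the derivative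
  have hECD : ∀ (ψ y : X), DerivAtZero F ψ y → ∀ ε : ℝ, 0 < ε →
      ∃ δ : ℝ, (0 < δ ∧ δ ≤ 1) ∧ ∃ K : ℕ, 1 ≤ K ∧ ∀ k, K ≤ k → ∀ d : ℕ,
        (d:ℝ)*t ≤ δ*(gk k:ℝ) → ‖((F (t/(gk k:ℝ)))^d) ψ - ψ‖ ≤ ε := by
    intro ψ y hψ ε hε
    set C₁ := M * Real.exp |a| with hC₁def
    have hC₁1 : 1 ≤ C₁ := by
      have := Real.one_le_exp (abs_nonneg a); nlinarith
    have hC₁0 : (0:ℝ) < C₁ := lt_of_lt_of_le zero_lt_one hC₁1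
    obtain ⟨η, hη, hest⟩ := derivAtZero_est F hF0 hψ (ε := 1) one_pos
    set B := C₁ * (‖y‖ + 1) with hBdef
    have hB : 0 < B := by positivity
    set δ := min 1 (ε / (B + 1)) with hδdef
    have hδpos : 0 < δ := lt_min one_pos (by positivity)
    have hδ1 : δ ≤ 1 := min_le_left _ _
    obtain ⟨K₀, hK₀⟩ := eventually_atTop.1 (hτ0.eventually (gt_mem_nhds hη))
    refine ⟨δ, ⟨hδpos, hδ1⟩, max K₀ 1, le_max_right _ _, fun k hk d hd => ?_⟩
    have hk1 : 1 ≤ k := le_trans (le_max_right _ _) hk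
    have hkK₀ : K₀ ≤ k := le_trans (le_max_left _ _) hk
    have hN1 : (1:ℝ) ≤ (gk k:ℝ) := hNk k hk1
    have hNpos : (0:ℝ) < (gk k:ℝ) := lt_of_lt_of_le zero_lt_one hN1
    rcases Nat.eq_zero_or_pos d with hd0 | _
    · subst hd0; simp; positivity
    set τ := t / (gk k:ℝ) with hτdef
    have hτp : 0 < τ := div_pos ht hNpos
    have hτη : τ < η := hK₀ k hkK₀
    have hCj : ∀ j, j ≤ d → ‖((F τ)^j : X →L[ℝ] X)‖ ≤ C₁ := by
      intro j hj
      have : (j:ℝ) * t ≤ (gk k:ℝ) * 1 := by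
        have hjd : (j:ℝ) ≤ (d:ℝ) := by exact_mod_cast hj
        nlinarith [ht.le]
      simpa using hpow k hk1 j 1 zero_le_one this
    have h1 : ‖F τ ψ - ψ‖ ≤ τ * (‖y‖ + 1) := by
      have h2 := hest τ hτp hτη
      have h3 : F τ ψ - ψ = (F τ ψ - ψ - τ•y) + τ•y := by abel
      rw [h3]
      calc ‖(F τ ψ - ψ - τ•y) + τ•y‖ ≤ ‖F τ ψ - ψ - τ•y‖ + ‖τ•y‖ := norm_add_le _ _
        _ ≤ τ * 1 + τ * ‖y‖ := by
            refine add_le_add h2 ?_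
            rw [norm_smul, Real.norm_eq_abs, abs_of_pos hτp]
        _ = τ * (‖y‖ + 1) := by ring
    have h4 : ‖((F τ)^d) ψ - ψ‖ ≤ d * (C₁ * ‖F τ ψ - ψ‖) := pow_sub_one_est (F τ) ψ C₁ d hCj
    have hdτ : (d:ℝ) * τ ≤ δ := by
      have he : (d:ℝ)*τ = (d:ℝ)*t/(gk k:ℝ) := by rw [hτdef]; ring
      rw [he, div_le_iff₀ hNpos]
      nlinarith
    calc ‖((F τ)^d) ψ - ψ‖ ≤ d * (C₁ * (τ * (‖y‖+1))) := by
          refine le_trans h4 ?_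
          gcongr
        _ = B * ((d:ℝ)*τ) := by rw [hBdef]; ring
        _ ≤ B * δ := mul_le_mul_of_nonneg_left hdτ hB.le
        _ ≤ ε := by
          have hδ2 : δ ≤ ε/(B+1) := min_le_right _ _
          have h5 : B/(B+1) ≤ 1 := (div_le_one (by positivity)).2 (by linarith)
          calc B * δ ≤ B * (ε/(B+1)) := mul_le_mul_of_nonneg_left hδ2 hB.le
            _ = ε * (B/(B+1)) := by ring
            _ ≤ ε * 1 := mul_le_mul_of_nonneg_left h5 hε.le
            _ = ε := mul_one ε
  -- equicontinuity for all vectors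
  have hEC : ∀ (g : X) (ε : ℝ), 0 < ε →
      ∃ δ : ℝ, (0 < δ ∧ δ ≤ 1) ∧ ∃ K : ℕ, 1 ≤ K ∧ ∀ k, K ≤ k → ∀ d : ℕ,
        (d:ℝ)*t ≤ δ*(gk k:ℝ) → ‖((F (t/(gk k:ℝ)))^d) g - g‖ ≤ ε := by
    intro g ε hε
    set C₁ := M * Real.exp |a| with hC₁def
    have hC₁1 : 1 ≤ C₁ := by
      have := Real.one_le_exp (abs_nonneg a); nlinarith
    have hC₁0 : (0:ℝ) < C₁ := lt_of_lt_of_le zero_lt_one hC₁1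
    obtain ⟨ψ, hψmem, hψdist⟩ := hdense.exists_dist_lt g
      (show 0 < ε/(2*(C₁ + 1)) by positivity)
    obtain ⟨y, hy⟩ := hψmem
    obtain ⟨δ, hδ, K, hK, hbody⟩ := hECD ψ y hy (ε/2) (by linarith)
    refine ⟨δ, hδ, K, hK, fun k hk d hd => ?_⟩
    have hk1 : 1 ≤ k := le_trans hK hk
    have hN1 : (1:ℝ) ≤ (gk k:ℝ) := hNk k hk1
    have hCd : ∀ x : X, ‖((F (t/(gk k:ℝ)))^d) x‖ ≤ C₁ * ‖x‖ := by
      intro x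
      have hb : (d:ℝ) * t ≤ (gk k:ℝ) * 1 := by nlinarith [hδ.2, hδ.1.le]
      simpa using hpow' k hk1 d 1 zero_le_one hb x
    have hgψ : ‖g - ψ‖ < ε/(2*(C₁+1)) := by rw [← dist_eq_norm]; exact hψdist
    have hsplit : ((F (t/(gk k:ℝ)))^d) g - g
        = ((F (t/(gk k:ℝ)))^d) (g - ψ) + (((F (t/(gk k:ℝ)))^d) ψ - ψ) + (ψ - g) := by
      rw [map_sub]; abel
    rw [hsplit]
    calc ‖((F (t/(gk k:ℝ)))^d) (g - ψ) + (((F (t/(gk k:ℝ)))^d) ψ - ψ) + (ψ - g)‖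
        ≤ ‖((F (t/(gk k:ℝ)))^d) (g - ψ)‖ + ‖((F (t/(gk k:ℝ)))^d) ψ - ψ‖ + ‖ψ - g‖ :=
          norm_add₃_le
      _ ≤ C₁ * ‖g - ψ‖ + ε/2 + ‖g - ψ‖ := by
          refine add_le_add (add_le_add (hCd _) (hbody k hk d hd)) ?_
          rw [norm_sub_rev]
      _ ≤ ε := by
          have hmul : (C₁+1) * ‖g - ψ‖ < (C₁+1) * (ε/(2*(C₁+1))) :=
            mul_lt_mul_of_pos_left hgψ (by linarith)
          have heq : (C₁+1) * (ε/(2*(C₁+1))) = ε/2 := by field_simp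
          have hexp : (C₁+1) * ‖g - ψ‖ = C₁ * ‖g - ψ‖ + ‖g - ψ‖ := by ring
          linarith
  -- difference of powers estimate
  have hdiffpow : ∀ (k : ℕ), 1 ≤ k → ∀ (i d : ℕ) (b : ℝ), 0 ≤ b → (i:ℝ)*t ≤ (gk k:ℝ)*b →
      ∀ g : X, ‖((F (t/(gk k:ℝ)))^(i+d)) g - ((F (t/(gk k:ℝ)))^i) g‖
        ≤ M*Real.exp (|a| * b) * ‖((F (t/(gk k:ℝ)))^d) g - g‖ := by
    intro k hk i d b hb hib g
    have hid : ((F (t/(gk k:ℝ)))^(i+d)) g - ((F (t/(gk k:ℝ)))^i) g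
        = ((F (t/(gk k:ℝ)))^i) (((F (t/(gk k:ℝ)))^d) g - g) := by
      rw [map_sub, pow_add, ContinuousLinearMap.mul_apply]
    rw [hid]
    exact hpow' k hk i b hb hib _
  -- limits on the algebraic span, rational times
  have hspan : ∀ g ∈ Submodule.span ℝ Φ, ∀ q : ℚ, 0 ≤ (q:ℝ) →
      ∃ L, Tendsto (fun k => ((F (t/(gk k:ℝ)))^⌊(gk k:ℝ)*(q:ℝ)⌋₊) g) atTop (𝓝 L) := by
    intro g hg q hq
    induction hg using Submodule.span_induction with
    | mem x hx => exact hlim x hx q hq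
    | zero => exact ⟨0, by simp only [map_zero]; exact tendsto_const_nhds⟩
    | add x y hx hy ihx ihy =>
        obtain ⟨L1, h1⟩ := ihx
        obtain ⟨L2, h2⟩ := ihy
        exact ⟨L1 + L2, by simpa [map_add] using h1.add h2⟩
    | smul c x hx ihx =>
        obtain ⟨L, h⟩ := ihx
        exact ⟨c • L, by simpa [_root_.map_smul] using h.const_smul c⟩
  -- limits on the closed span, rational times
  have hclq : ∀ g ∈ closedSpan Φ, ∀ q : ℚ, 0 ≤ (q:ℝ) →
      ∃ L, Tendsto (fun k => ((F (t/(gk k:ℝ)))^⌊(gk k:ℝ)*(q:ℝ)⌋₊) g) atTop (𝓝 L) := by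
    intro g hg q hq
    have hgc : g ∈ closure ((Submodule.span ℝ Φ : Submodule ℝ X) : Set X) := by
      rw [← Submodule.topologicalClosure_coe]; exact hg
    apply cauchySeq_tendsto_of_complete
    apply cauchySeq_of_approx
    intro ε hε
    set Cq := M * Real.exp (|a| * ((q:ℝ)*t)) with hCqdef
    have hCq0 : (0:ℝ) < Cq := by positivity
    obtain ⟨g', hg'mem, hg'dist⟩ := Metric.mem_closure_iff.1 hgc (ε/(Cq+1)) (by positivity)
    obtain ⟨L, hL⟩ := hspan g' hg'mem q hq
    refine ⟨fun k => ((F (t/(gk k:ℝ)))^⌊(gk k:ℝ)*(q:ℝ)⌋₊) g', hL.cauchySeq, ?_⟩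
    filter_upwards [eventually_ge_atTop 1] with k hk
    have hfl : (⌊(gk k:ℝ)*(q:ℝ)⌋₊ : ℝ) ≤ (gk k:ℝ)*(q:ℝ) :=
      Nat.floor_le (mul_nonneg (Nat.cast_nonneg _) hq)
    have hb : (⌊(gk k:ℝ)*(q:ℝ)⌋₊ : ℝ) * t ≤ (gk k:ℝ) * ((q:ℝ)*t) := by nlinarith [ht.le]
    have h2 := hpow' k hk ⌊(gk k:ℝ)*(q:ℝ)⌋₊ ((q:ℝ)*t) (by positivity) hb (g - g')
    rw [map_sub] at h2
    have hdist : ‖g - g'‖ < ε/(Cq+1) := by rw [← dist_eq_norm]; exact hg'dist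
    have hmul : Cq * ‖g - g'‖ ≤ Cq * (ε/(Cq+1)) :=
      mul_le_mul_of_nonneg_left hdist.le hCq0.le
    have heq : Cq * (ε/(Cq+1)) ≤ ε := hdivle Cq ε hCq0 hε
    calc ‖((F (t/(gk k:ℝ)))^⌊(gk k:ℝ)*(q:ℝ)⌋₊) g - ((F (t/(gk k:ℝ)))^⌊(gk k:ℝ)*(q:ℝ)⌋₊) g'‖
        ≤ Cq * ‖g - g'‖ := h2
      _ ≤ ε := le_trans hmul heq
  -- limits on the closed span, real times
  have hlimreal : ∀ g ∈ closedSpan Φ, ∀ s : ℝ, 0 ≤ s →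
      ∃ L, Tendsto (fun k => ((F (t/(gk k:ℝ)))^⌊(gk k:ℝ)*s⌋₊) g) atTop (𝓝 L) := by
    intro g hg s hs
    apply cauchySeq_tendsto_of_complete
    apply cauchySeq_of_approx
    intro ε hε
    set Cs := M * Real.exp (|a| * (s*t + t)) with hCsdef
    have hCs0 : (0:ℝ) < Cs := by positivity
    obtain ⟨δ, ⟨hδ0, hδ1⟩, K, hK1, hECg⟩ := hEC g (ε/(Cs+1)) (by positivity)
    obtain ⟨q, hq1, hq2⟩ := exists_rat_btwn
      (lt_add_of_pos_right s (show (0:ℝ) < δ/(2*t) by positivity))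
    have hq0 : 0 ≤ (q:ℝ) := le_of_lt (lt_of_le_of_lt hs hq1)
    obtain ⟨L, hL⟩ := hclq g hg q hq0
    refine ⟨fun k => ((F (t/(gk k:ℝ)))^⌊(gk k:ℝ)*(q:ℝ)⌋₊) g, hL.cauchySeq, ?_⟩
    have hNbig := (tendsto_nat_cast_strictMono hgk).eventually_ge_atTop (2*t/δ)
    filter_upwards [eventually_ge_atTop (max K 1), hNbig] with k hk hkN
    have hkK : K ≤ k := le_trans (le_max_left _ _) hk
    have hk1 : 1 ≤ k := le_trans (le_max_right _ _) hk
    have hN1 : (1:ℝ) ≤ (gk k:ℝ) := hNk k hk1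
    have hNpos : (0:ℝ) < (gk k:ℝ) := lt_of_lt_of_le zero_lt_one hN1
    set i := ⌊(gk k:ℝ)*s⌋₊ with hidef
    set j := ⌊(gk k:ℝ)*(q:ℝ)⌋₊ with hjdef
    have hij : i ≤ j := Nat.floor_le_floor (by nlinarith [hq1.le])
    have hcast : ((j-i:ℕ):ℝ) = (j:ℝ) - (i:ℝ) := by
      push_cast [hij]; ring
    have hjle : (j:ℝ) ≤ (gk k:ℝ)*(q:ℝ) := Nat.floor_le (by positivity)
    have hilt : (gk k:ℝ)*s - 1 < (i:ℝ) := by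
      have := Nat.lt_floor_add_one ((gk k:ℝ)*s); linarith
    have hile : (i:ℝ) ≤ (gk k:ℝ)*s := Nat.floor_le (by positivity)
    have hdb : ((j-i:ℕ):ℝ) * t ≤ δ * (gk k:ℝ) := by
      have h1 : ((j-i:ℕ):ℝ) ≤ (gk k:ℝ)*((q:ℝ)-s) + 1 := by
        rw [hcast]; nlinarith
      have h2 : (q:ℝ) - s ≤ δ/(2*t) := by linarith
      have h5 : (gk k:ℝ)*((q:ℝ)-s)*t ≤ (gk k:ℝ)*(δ/2) := by
        calc (gk k:ℝ)*((q:ℝ)-s)*t ≤ (gk k:ℝ)*(δ/(2*t))*t :=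
              mul_le_mul_of_nonneg_right
                (mul_le_mul_of_nonneg_left h2 hNpos.le) ht.le
          _ = (gk k:ℝ)*(δ/2) := by field_simp
      have h3 : t ≤ δ*(gk k:ℝ)/2 := by
        rw [div_le_iff₀ hδ0] at hkN
        nlinarith
      calc ((j-i:ℕ):ℝ)*t ≤ ((gk k:ℝ)*((q:ℝ)-s) + 1)*t :=
            mul_le_mul_of_nonneg_right h1 ht.le
        _ = (gk k:ℝ)*((q:ℝ)-s)*t + t := by ring
        _ ≤ (gk k:ℝ)*(δ/2) + δ*(gk k:ℝ)/2 := add_le_add h5 h3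
        _ = δ * (gk k:ℝ) := by ring
    have hib : (i:ℝ)*t ≤ (gk k:ℝ)*(s*t + t) := by nlinarith [ht.le]
    have hkey := hdiffpow k hk1 i (j-i) (s*t+t) (by positivity) hib g
    rw [Nat.add_sub_cancel' hij] at hkey
    have hECval := hECg k hkK (j-i) hdb
    rw [norm_sub_rev]
    calc ‖((F (t/(gk k:ℝ)))^j) g - ((F (t/(gk k:ℝ)))^i) g‖
        ≤ Cs * ‖((F (t/(gk k:ℝ)))^(j-i)) g - g‖ := hkey
      _ ≤ Cs * (ε/(Cs+1)) := mul_le_mul_of_nonneg_left hECval hCs0.le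
      _ ≤ ε := hdivle Cs ε hCs0 hε
  refine ⟨hlimreal, ?_⟩
  intro T hT
  -- floor-exponent bound helper
  have hflb : ∀ (k : ℕ) (w : ℝ), 0 ≤ w → (⌊(gk k:ℝ)*(w/t)⌋₊ : ℝ) * t ≤ (gk k:ℝ) * w := by
    intro k w hw
    have hnn : 0 ≤ (gk k:ℝ)*(w/t) := mul_nonneg (Nat.cast_nonneg _) (div_nonneg hw ht.le)
    have hfl : (⌊(gk k:ℝ)*(w/t)⌋₊:ℝ) ≤ (gk k:ℝ)*(w/t) := Nat.floor_le hnn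
    calc (⌊(gk k:ℝ)*(w/t)⌋₊ : ℝ) * t ≤ ((gk k:ℝ)*(w/t)) * t :=
          mul_le_mul_of_nonneg_right hfl ht.le
      _ = (gk k:ℝ) * w := by field_simp
  -- T 0 is the identity on the closed span
  have hT0 : ∀ g ∈ closedSpan Φ, T 0 g = g := by
    intro g hg
    have h1 := hT 0 le_rfl g hg
    have h2 : Tendsto (fun k : ℕ => ((F (t/(gk k:ℝ)))^⌊(gk k:ℝ)*((0:ℝ)/t)⌋₊) g)
        atTop (𝓝 g) := by
      simp only [zero_div, mul_zero, Nat.floor_zero, pow_zero, ContinuousLinearMap.one_apply]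
      exact tendsto_const_nhds
    exact tendsto_nhds_unique h1 h2
  -- T s is Lipschitz on the closed span
  have hTdiff : ∀ s : ℝ, 0 ≤ s → ∀ g ∈ closedSpan Φ, ∀ g' ∈ closedSpan Φ,
      ‖T s g - T s g'‖ ≤ M * Real.exp (|a| * s) * ‖g - g'‖ := by
    intro s hs g hg g' hg'
    refine le_of_tendsto ((hT s hs g hg).sub (hT s hs g' hg')).norm ?_
    filter_upwards [eventually_ge_atTop 1] with k hk
    have h3 := hpow' k hk ⌊(gk k:ℝ)*(s/t)⌋₊ s hs (hflb k s hs) (g - g')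
    rw [map_sub] at h3
    exact h3
  -- part (a): semigroup property
  have hTa : ∀ f ∈ closedSpan Φ, ∀ s : ℝ, 0 ≤ s → T s f ∈ closedSpan Φ →
      ∀ l : ℝ, 0 < l → T (s + l) f = T l (T s f) := by
    intro f hf s hs hTsf l hl
    have hsl : (0:ℝ) ≤ s + l := by linarith
    have h1 := hT (s+l) hsl f hf
    have h2 := hT l hl.le (T s f) hTsf
    have hP2 : Tendsto (fun k => ((F (t/(gk k:ℝ)))^⌊(gk k:ℝ)*(l/t)⌋₊)
        (((F (t/(gk k:ℝ)))^⌊(gk k:ℝ)*(s/t)⌋₊) f - T s f)) atTop (𝓝 0) := by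
      refine squeeze_zero_norm'
        (a := fun k => M * Real.exp (|a| * l) *
          ‖((F (t/(gk k:ℝ)))^⌊(gk k:ℝ)*(s/t)⌋₊) f - T s f‖) ?_ ?_
      · filter_upwards [eventually_ge_atTop 1] with k hk
        exact hpow' k hk _ l hl.le (hflb k l hl.le) _
      · have := (tendsto_iff_norm_sub_tendsto_zero.1 (hT s hs f hf)).const_mul
          (M * Real.exp (|a| * l))
        simpa using this
    have hP1 : Tendsto (fun k => ((F (t/(gk k:ℝ)))^⌊(gk k:ℝ)*((s+l)/t)⌋₊) f
        - ((F (t/(gk k:ℝ)))^(⌊(gk k:ℝ)*(l/t)⌋₊ + ⌊(gk k:ℝ)*(s/t)⌋₊)) f) atTop (𝓝 0) := by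
      rw [NormedAddCommGroup.tendsto_nhds_zero]
      intro ε hε
      set C' := M * Real.exp (|a| * (s+l)) with hC'def
      have hC'0 : (0:ℝ) < C' := by positivity
      obtain ⟨δ, ⟨hδ0, hδ1⟩, K, hK1, hECf⟩ := hEC f ((ε/2)/(C'+1)) (by positivity)
      have hNbig := (tendsto_nat_cast_strictMono hgk).eventually_ge_atTop (t/δ)
      filter_upwards [eventually_ge_atTop (max K 1), hNbig] with k hk hkN
      have hkK : K ≤ k := le_trans (le_max_left _ _) hk
      have hk1 : 1 ≤ k := le_trans (le_max_right _ _) hk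
      have hN1 : (1:ℝ) ≤ (gk k:ℝ) := hNk k hk1
      have hNpos : (0:ℝ) < (gk k:ℝ) := lt_of_lt_of_le zero_lt_one hN1
      set e₁ := ⌊(gk k:ℝ)*((s+l)/t)⌋₊ with he₁
      set e₂ := ⌊(gk k:ℝ)*(s/t)⌋₊ with he₂
      set e₃ := ⌊(gk k:ℝ)*(l/t)⌋₊ with he₃
      have hsnn : 0 ≤ (gk k:ℝ)*(s/t) := mul_nonneg (Nat.cast_nonneg _) (div_nonneg hs ht.le)
      have hlnn : 0 ≤ (gk k:ℝ)*(l/t) := mul_nonneg (Nat.cast_nonneg _) (div_nonneg hl.le ht.le)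
      have hsum : (gk k:ℝ)*((s+l)/t) = (gk k:ℝ)*(l/t) + (gk k:ℝ)*(s/t) := by ring
      have hfladd := nat_floor_add_le hlnn hsnn
      have hle : e₃ + e₂ ≤ e₁ := by rw [he₁, hsum]; exact hfladd.1
      have hub : e₁ ≤ e₃ + e₂ + 1 := by rw [he₁, hsum]; exact hfladd.2
      set d := e₁ - (e₃ + e₂) with hddef
      have hd1 : d ≤ 1 := by omega
      have hsplit : e₁ = (e₃ + e₂) + d := by omega
      have hbexp : ((e₃+e₂ : ℕ):ℝ) * t ≤ (gk k:ℝ)*(s+l) := by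
        have b1 := hflb k s hs
        have b2 := hflb k l hl.le
        push_cast
        rw [← he₂, ← he₃] at *
        nlinarith [b1, b2]
      have hkey := hdiffpow k hk1 (e₃+e₂) d (s+l) hsl hbexp f
      have hECd : ‖((F (t/(gk k:ℝ)))^d) f - f‖ ≤ (ε/2)/(C'+1) := by
        refine hECf k hkK d ?_
        have : ((d:ℕ):ℝ) ≤ 1 := by exact_mod_cast hd1
        have ht2 : t ≤ δ * (gk k:ℝ) := by
          rw [div_le_iff₀ hδ0] at hkN
          linarith
        nlinarith [ht.le]
      rw [hsplit]
      calc ‖((F (t/(gk k:ℝ)))^((e₃+e₂)+d)) f - ((F (t/(gk k:ℝ)))^(e₃+e₂)) f‖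
          ≤ C' * ‖((F (t/(gk k:ℝ)))^d) f - f‖ := hkey
        _ ≤ C' * ((ε/2)/(C'+1)) := mul_le_mul_of_nonneg_left hECd hC'0.le
        _ ≤ ε/2 := hdivle C' (ε/2) hC'0 (by linarith)
        _ < ε := by linarith
    have hid : ∀ k : ℕ, ((F (t/(gk k:ℝ)))^⌊(gk k:ℝ)*((s+l)/t)⌋₊) f
        - ((F (t/(gk k:ℝ)))^⌊(gk k:ℝ)*(l/t)⌋₊) (T s f)
        = (((F (t/(gk k:ℝ)))^⌊(gk k:ℝ)*((s+l)/t)⌋₊) f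
            - ((F (t/(gk k:ℝ)))^(⌊(gk k:ℝ)*(l/t)⌋₊ + ⌊(gk k:ℝ)*(s/t)⌋₊)) f)
          + ((F (t/(gk k:ℝ)))^⌊(gk k:ℝ)*(l/t)⌋₊)
              (((F (t/(gk k:ℝ)))^⌊(gk k:ℝ)*(s/t)⌋₊) f - T s f) := by
      intro k
      rw [map_sub, pow_add, ContinuousLinearMap.mul_apply]
      abel
    have key : Tendsto (fun k => ((F (t/(gk k:ℝ)))^⌊(gk k:ℝ)*((s+l)/t)⌋₊) f
        - ((F (t/(gk k:ℝ)))^⌊(gk k:ℝ)*(l/t)⌋₊) (T s f)) atTop (𝓝 0) := by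
      have := hP1.add hP2
      rw [add_zero] at this
      exact this.congr (fun k => (hid k).symm)
    have h3 : Tendsto (fun k => ((F (t/(gk k:ℝ)))^⌊(gk k:ℝ)*(l/t)⌋₊) (T s f))
        atTop (𝓝 (T (s+l) f)) := by
      have := h1.sub key
      rw [sub_zero] at this
      exact this.congr (fun k => by abel)
    exact tendsto_nhds_unique h3 h2
  -- main quantitative estimate
  have hEST : ∀ g ∈ closedSpan Φ, ∀ y ∈ closedSpan Φ, ∀ fn yn : ℕ → X,
      (∀ n, fn n ∈ closedSpan Φ ∧ DerivAtZero F (fn n) (yn n)) →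
      Tendsto fn atTop (𝓝 g) → Tendsto yn atTop (𝓝 y) →
      ∀ S : ℝ, 0 ≤ S → ∀ ε : ℝ, 0 < ε → ∃ δ : ℝ, 0 < δ ∧
        ∀ u v : ℝ, 0 ≤ u → u ≤ v → v ≤ S → v - u ≤ δ →
          ‖T v g - T u g - (v - u) • T u y‖ ≤ (v - u) * ε ∧
          ‖T v g - T u g - (v - u) • T v y‖ ≤ (v - u) * ε := by
    intro g hg y hy fn yn hfn hfng hyny S hS ε hε
    set C := M * Real.exp (|a| * (S+1)) with hCdef
    have hC1 : (1:ℝ) ≤ C := by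
      have := Real.one_le_exp (show 0 ≤ |a| * (S+1) by positivity)
      nlinarith
    have hC0 : (0:ℝ) < C := lt_of_lt_of_le zero_lt_one hC1
    set ee := ε / (8 * C * C) with heedef
    have hee0 : 0 < ee := by positivity
    have h8 : ee * (8*C*C) = ε := by rw [heedef]; field_simp
    obtain ⟨δ₀, ⟨hδ₀0, hδ₀1⟩, K₀, hK₀1, hECy⟩ := hEC y ee hee0
    refine ⟨δ₀/2, by positivity, ?_⟩
    intro u v hu huv hvS hδuv
    have hv0 : (0:ℝ) ≤ v := le_trans hu huv
    have hvS1 : v ≤ S + 1 := by linarith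
    have huS1 : u ≤ S + 1 := by linarith
    have hMexpv : M * Real.exp (|a| * v) ≤ C := by
      rw [hCdef]
      have : Real.exp (|a| * v) ≤ Real.exp (|a| * (S+1)) :=
        Real.exp_le_exp.2 (mul_le_mul_of_nonneg_left hvS1 (abs_nonneg a))
      nlinarith
    have hMexpu : M * Real.exp (|a| * u) ≤ C := by
      rw [hCdef]
      have : Real.exp (|a| * u) ≤ Real.exp (|a| * (S+1)) :=
        Real.exp_le_exp.2 (mul_le_mul_of_nonneg_left huS1 (abs_nonneg a))
      nlinarith
    have hmle : ∀ k : ℕ, ⌊(gk k:ℝ)*(u/t)⌋₊ ≤ ⌊(gk k:ℝ)*(v/t)⌋₊ := by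
      intro k
      apply Nat.floor_le_floor
      have hq : u/t ≤ v/t := by gcongr
      exact mul_le_mul_of_nonneg_left hq (Nat.cast_nonneg _)
    have hscal : Tendsto (fun k =>
        ((⌊(gk k:ℝ)*(v/t)⌋₊ - ⌊(gk k:ℝ)*(u/t)⌋₊ : ℕ):ℝ) * (t/(gk k:ℝ)))
        atTop (𝓝 (v-u)) := by
      have h3 := (floor_mul_div_tendsto t ht hgk v hv0).sub
        (floor_mul_div_tendsto t ht hgk u hu)
      refine h3.congr (fun k => ?_)
      rw [Nat.cast_sub (hmle k)]; ring
    have hclaim : ∀ n : ℕ,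
        ‖T v (fn n) - T u (fn n) - (v-u) • T u y‖
          ≤ C * (v-u) * (C*(ee + ‖yn n - y‖) + ee) ∧
        ‖T v (fn n) - T u (fn n) - (v-u) • T v y‖
          ≤ C * (v-u) * (C*(ee + ‖yn n - y‖ + ee) + C*ee) := by
      intro n
      obtain ⟨hfnmem, hfnder⟩ := hfn n
      obtain ⟨η, hη0, hηest⟩ := derivAtZero_est F hF0 hfnder hee0
      have hNbig := (tendsto_nat_cast_strictMono hgk).eventually_ge_atTop (2*t/δ₀)
      have hτη := hτ0.eventually (gt_mem_nhds hη0)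
      -- the common eventual bound, giving both claims
      have hcore : ∀ᶠ k in atTop,
          (‖((F (t/(gk k:ℝ)))^⌊(gk k:ℝ)*(v/t)⌋₊) (fn n)
            - ((F (t/(gk k:ℝ)))^⌊(gk k:ℝ)*(u/t)⌋₊) (fn n)
            - (((⌊(gk k:ℝ)*(v/t)⌋₊ - ⌊(gk k:ℝ)*(u/t)⌋₊ : ℕ):ℝ) * (t/(gk k:ℝ)))
                • (((F (t/(gk k:ℝ)))^⌊(gk k:ℝ)*(u/t)⌋₊) y)‖
            ≤ C * ((v-u) + t/(gk k:ℝ)) * (C*(ee + ‖yn n - y‖) + ee)) ∧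
          (‖((F (t/(gk k:ℝ)))^⌊(gk k:ℝ)*(v/t)⌋₊) (fn n)
            - ((F (t/(gk k:ℝ)))^⌊(gk k:ℝ)*(u/t)⌋₊) (fn n)
            - (((⌊(gk k:ℝ)*(v/t)⌋₊ - ⌊(gk k:ℝ)*(u/t)⌋₊ : ℕ):ℝ) * (t/(gk k:ℝ)))
                • (((F (t/(gk k:ℝ)))^⌊(gk k:ℝ)*(v/t)⌋₊) y)‖
            ≤ C * ((v-u) + t/(gk k:ℝ)) * (C*(ee + ‖yn n - y‖ + ee) + C*ee)) := by
        filter_upwards [eventually_ge_atTop (max K₀ 1), hNbig, hτη] with k hk hkN hkη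
        have hk1 : 1 ≤ k := le_trans (le_max_right _ _) hk
        have hkK₀ : K₀ ≤ k := le_trans (le_max_left _ _) hk
        have hN1 : (1:ℝ) ≤ (gk k:ℝ) := hNk k hk1
        have hNpos : (0:ℝ) < (gk k:ℝ) := lt_of_lt_of_le zero_lt_one hN1
        have hτp : 0 < t/(gk k:ℝ) := div_pos ht hNpos
        have hmuv : ⌊(gk k:ℝ)*(u/t)⌋₊ ≤ ⌊(gk k:ℝ)*(v/t)⌋₊ := hmle k
        have hcast : ((⌊(gk k:ℝ)*(v/t)⌋₊ - ⌊(gk k:ℝ)*(u/t)⌋₊ : ℕ):ℝ)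
            = (⌊(gk k:ℝ)*(v/t)⌋₊:ℝ) - (⌊(gk k:ℝ)*(u/t)⌋₊:ℝ) := by
          push_cast [hmuv]; ring
        have hmvle : (⌊(gk k:ℝ)*(v/t)⌋₊:ℝ) * t ≤ (gk k:ℝ)*v := hflb k v hv0
        have hmult : (⌊(gk k:ℝ)*(u/t)⌋₊:ℝ) > (gk k:ℝ)*(u/t) - 1 := by
          have := Nat.lt_floor_add_one ((gk k:ℝ)*(u/t)); linarith
        have hut : ((gk k:ℝ)*(u/t)) * t = (gk k:ℝ)*u := by field_simp
        have h4 : ((⌊(gk k:ℝ)*(v/t)⌋₊ - ⌊(gk k:ℝ)*(u/t)⌋₊ : ℕ):ℝ) * t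
            ≤ (gk k:ℝ)*v - (gk k:ℝ)*u + t := by
          rw [hcast]
          nlinarith [ht.le]
        have h7 : t ≤ δ₀*(gk k:ℝ)/2 := by
          rw [div_le_iff₀ hδ₀0] at hkN
          nlinarith
        have hdb : ((⌊(gk k:ℝ)*(v/t)⌋₊ - ⌊(gk k:ℝ)*(u/t)⌋₊ : ℕ):ℝ) * t ≤ δ₀ * (gk k:ℝ) := by
          have h6 : (gk k:ℝ)*v - (gk k:ℝ)*u ≤ (gk k:ℝ)*(δ₀/2) := by nlinarith
          linarith
        have hdτ : ((⌊(gk k:ℝ)*(v/t)⌋₊ - ⌊(gk k:ℝ)*(u/t)⌋₊ : ℕ):ℝ) * (t/(gk k:ℝ))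
            ≤ (v-u) + t/(gk k:ℝ) := by
          rw [show ((⌊(gk k:ℝ)*(v/t)⌋₊ - ⌊(gk k:ℝ)*(u/t)⌋₊ : ℕ):ℝ) * (t/(gk k:ℝ))
            = ((⌊(gk k:ℝ)*(v/t)⌋₊ - ⌊(gk k:ℝ)*(u/t)⌋₊ : ℕ):ℝ) * t / (gk k:ℝ) by ring]
          rw [div_le_iff₀ hNpos]
          have : ((v-u) + t/(gk k:ℝ)) * (gk k:ℝ) = (gk k:ℝ)*v - (gk k:ℝ)*u + t := by
            field_simp
          rw [this]
          exact h4
        have hCj : ∀ j, j ≤ ⌊(gk k:ℝ)*(u/t)⌋₊ + (⌊(gk k:ℝ)*(v/t)⌋₊ - ⌊(gk k:ℝ)*(u/t)⌋₊)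
            → ‖((F (t/(gk k:ℝ)))^j : X →L[ℝ] X)‖ ≤ C := by
          intro j hj
          rw [Nat.add_sub_cancel' hmuv] at hj
          rw [hCdef]
          apply hpow k hk1 j (S+1) (by linarith)
          have h1 : (j:ℝ) ≤ (⌊(gk k:ℝ)*(v/t)⌋₊:ℝ) := by exact_mod_cast hj
          have h2 : (j:ℝ)*t ≤ (⌊(gk k:ℝ)*(v/t)⌋₊:ℝ)*t := mul_le_mul_of_nonneg_right h1 ht.le
          have h3 : (gk k:ℝ)*v ≤ (gk k:ℝ)*(S+1) := mul_le_mul_of_nonneg_left hvS1 hNpos.le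
          linarith
        have hECj : ∀ j, j ≤ ⌊(gk k:ℝ)*(v/t)⌋₊ - ⌊(gk k:ℝ)*(u/t)⌋₊ →
            ‖((F (t/(gk k:ℝ)))^j) y - y‖ ≤ ee := by
          intro j hj
          apply hECy k hkK₀ j
          have hjc : (j:ℝ) ≤ ((⌊(gk k:ℝ)*(v/t)⌋₊ - ⌊(gk k:ℝ)*(u/t)⌋₊ : ℕ):ℝ) := by
            exact_mod_cast hj
          linarith [mul_le_mul_of_nonneg_right hjc ht.le, hdb]
        have h1a : ‖(F (t/(gk k:ℝ))) (fn n) - (fn n) - (t/(gk k:ℝ)) • y‖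
            ≤ (t/(gk k:ℝ)) * (ee + ‖yn n - y‖) := by
          have ha := hηest (t/(gk k:ℝ)) hτp hkη
          have hb : (F (t/(gk k:ℝ))) (fn n) - fn n - (t/(gk k:ℝ)) • y
              = ((F (t/(gk k:ℝ))) (fn n) - fn n - (t/(gk k:ℝ)) • (yn n))
                + (t/(gk k:ℝ)) • ((yn n) - y) := by
            rw [smul_sub]; abel
          rw [hb]
          refine le_trans (norm_add_le _ _) ?_
          have hc : ‖(t/(gk k:ℝ)) • ((yn n) - y)‖ = (t/(gk k:ℝ)) * ‖yn n - y‖ := by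
            rw [norm_smul, Real.norm_eq_abs, abs_of_pos hτp]
          rw [hc]
          calc ‖(F (t/(gk k:ℝ))) (fn n) - fn n - (t/(gk k:ℝ)) • (yn n)‖
                + (t/(gk k:ℝ)) * ‖yn n - y‖
              ≤ (t/(gk k:ℝ)) * ee + (t/(gk k:ℝ)) * ‖yn n - y‖ := by
                exact add_le_add ha le_rfl
            _ = (t/(gk k:ℝ)) * (ee + ‖yn n - y‖) := by ring
        constructor
        · -- first component
          have hkey := key_pow_est2 (F (t/(gk k:ℝ))) (fn n) y (t/(gk k:ℝ)) C
            (ee + ‖yn n - y‖) ee ⌊(gk k:ℝ)*(u/t)⌋₊ (⌊(gk k:ℝ)*(v/t)⌋₊ - ⌊(gk k:ℝ)*(u/t)⌋₊)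
            hτp.le hCj h1a hECj
          rw [Nat.add_sub_cancel' hmuv] at hkey
          refine le_trans hkey ?_
          have hpos : (0:ℝ) ≤ C*(ee + ‖yn n - y‖) + ee := by positivity
          exact mul_le_mul_of_nonneg_right
            (mul_le_mul_of_nonneg_left hdτ hC0.le) hpos
        · -- second component
          have h1b : ‖(F (t/(gk k:ℝ))) (fn n) - (fn n)
              - (t/(gk k:ℝ)) • (((F (t/(gk k:ℝ)))^(⌊(gk k:ℝ)*(v/t)⌋₊ - ⌊(gk k:ℝ)*(u/t)⌋₊)) y)‖
              ≤ (t/(gk k:ℝ)) * (ee + ‖yn n - y‖ + ee) := by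
            have hb : (F (t/(gk k:ℝ))) (fn n) - fn n
                - (t/(gk k:ℝ)) • (((F (t/(gk k:ℝ)))^(⌊(gk k:ℝ)*(v/t)⌋₊ - ⌊(gk k:ℝ)*(u/t)⌋₊)) y)
                = ((F (t/(gk k:ℝ))) (fn n) - fn n - (t/(gk k:ℝ)) • y)
                  + (t/(gk k:ℝ)) • (y - ((F (t/(gk k:ℝ)))^(⌊(gk k:ℝ)*(v/t)⌋₊ - ⌊(gk k:ℝ)*(u/t)⌋₊)) y) := by
              rw [smul_sub]; abel
            rw [hb]
            refine le_trans (norm_add_le _ _) ?_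
            have hc : ‖(t/(gk k:ℝ)) • (y - ((F (t/(gk k:ℝ)))^(⌊(gk k:ℝ)*(v/t)⌋₊ - ⌊(gk k:ℝ)*(u/t)⌋₊)) y)‖
                ≤ (t/(gk k:ℝ)) * ee := by
              rw [norm_smul, Real.norm_eq_abs, abs_of_pos hτp, norm_sub_rev]
              exact mul_le_mul_of_nonneg_left (hECj _ le_rfl) hτp.le
            calc _ ≤ (t/(gk k:ℝ)) * (ee + ‖yn n - y‖) + (t/(gk k:ℝ)) * ee :=
                  add_le_add h1a hc
              _ = (t/(gk k:ℝ)) * (ee + ‖yn n - y‖ + ee) := by ring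
          have h2b : ∀ j, j ≤ ⌊(gk k:ℝ)*(v/t)⌋₊ - ⌊(gk k:ℝ)*(u/t)⌋₊ →
              ‖((F (t/(gk k:ℝ)))^j) (((F (t/(gk k:ℝ)))^(⌊(gk k:ℝ)*(v/t)⌋₊ - ⌊(gk k:ℝ)*(u/t)⌋₊)) y)
                - ((F (t/(gk k:ℝ)))^(⌊(gk k:ℝ)*(v/t)⌋₊ - ⌊(gk k:ℝ)*(u/t)⌋₊)) y‖ ≤ C * ee := by
            intro j hj
            have hcomm : ((F (t/(gk k:ℝ)))^j) (((F (t/(gk k:ℝ)))^(⌊(gk k:ℝ)*(v/t)⌋₊ - ⌊(gk k:ℝ)*(u/t)⌋₊)) y)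
                = ((F (t/(gk k:ℝ)))^(⌊(gk k:ℝ)*(v/t)⌋₊ - ⌊(gk k:ℝ)*(u/t)⌋₊)) (((F (t/(gk k:ℝ)))^j) y) := by
              rw [← ContinuousLinearMap.mul_apply, ← pow_add, add_comm, pow_add,
                ContinuousLinearMap.mul_apply]
            rw [hcomm, ← map_sub]
            refine le_trans (((F (t/(gk k:ℝ)))^(⌊(gk k:ℝ)*(v/t)⌋₊ - ⌊(gk k:ℝ)*(u/t)⌋₊)).le_opNorm _) ?_
            have hop : ‖((F (t/(gk k:ℝ)))^(⌊(gk k:ℝ)*(v/t)⌋₊ - ⌊(gk k:ℝ)*(u/t)⌋₊) : X →L[ℝ] X)‖ ≤ C :=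
              hCj _ (le_add_self)
            exact mul_le_mul hop (hECj j hj) (norm_nonneg _) hC0.le
          have hkey := key_pow_est2 (F (t/(gk k:ℝ))) (fn n)
            (((F (t/(gk k:ℝ)))^(⌊(gk k:ℝ)*(v/t)⌋₊ - ⌊(gk k:ℝ)*(u/t)⌋₊)) y)
            (t/(gk k:ℝ)) C (ee + ‖yn n - y‖ + ee) (C*ee)
            ⌊(gk k:ℝ)*(u/t)⌋₊ (⌊(gk k:ℝ)*(v/t)⌋₊ - ⌊(gk k:ℝ)*(u/t)⌋₊)
            hτp.le hCj h1b h2b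
          rw [Nat.add_sub_cancel' hmuv] at hkey
          have hrw : ((F (t/(gk k:ℝ)))^⌊(gk k:ℝ)*(u/t)⌋₊)
              (((F (t/(gk k:ℝ)))^(⌊(gk k:ℝ)*(v/t)⌋₊ - ⌊(gk k:ℝ)*(u/t)⌋₊)) y)
              = ((F (t/(gk k:ℝ)))^⌊(gk k:ℝ)*(v/t)⌋₊) y := by
            rw [← ContinuousLinearMap.mul_apply, ← pow_add, Nat.add_sub_cancel' hmuv]
          rw [hrw] at hkey
          refine le_trans hkey ?_
          have hpos : (0:ℝ) ≤ C*(ee + ‖yn n - y‖ + ee) + C*ee := by positivity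
          exact mul_le_mul_of_nonneg_right
            (mul_le_mul_of_nonneg_left hdτ hC0.le) hpos
      constructor
      · have hLHS := (((hT v hv0 (fn n) hfnmem).sub (hT u hu (fn n) hfnmem)).sub
          (hscal.smul (hT u hu y hy))).norm
        have hRHS : Tendsto (fun k => C * ((v-u) + t/(gk k:ℝ)) * (C*(ee + ‖yn n - y‖) + ee))
            atTop (𝓝 (C * (v-u) * (C*(ee + ‖yn n - y‖) + ee))) := by
          have := ((hτ0.const_add (v-u)).const_mul C).mul_const (C*(ee + ‖yn n - y‖) + ee)
          simpa using this
        exact le_of_tendsto_of_tendsto hLHS hRHS (hcore.mono (fun k hk => hk.1))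
      · have hLHS := (((hT v hv0 (fn n) hfnmem).sub (hT u hu (fn n) hfnmem)).sub
          (hscal.smul (hT v hv0 y hy))).norm
        have hRHS : Tendsto (fun k => C * ((v-u) + t/(gk k:ℝ)) * (C*(ee + ‖yn n - y‖ + ee) + C*ee))
            atTop (𝓝 (C * (v-u) * (C*(ee + ‖yn n - y‖ + ee) + C*ee))) := by
          have := ((hτ0.const_add (v-u)).const_mul C).mul_const (C*(ee + ‖yn n - y‖ + ee) + C*ee)
          simpa using this
        exact le_of_tendsto_of_tendsto hLHS hRHS (hcore.mono (fun k hk => hk.2))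
    -- pass to the limit in n
    have hg0 : Tendsto (fun n => ‖g - fn n‖) atTop (𝓝 0) := by
      have := tendsto_iff_norm_sub_tendsto_zero.1 hfng
      exact this.congr (fun n => norm_sub_rev _ _)
    have hy0 : Tendsto (fun n => ‖yn n - y‖) atTop (𝓝 0) :=
      tendsto_iff_norm_sub_tendsto_zero.1 hyny
    have huv0 : (0:ℝ) ≤ v - u := by linarith
    constructor
    · have hper : ∀ n, ‖T v g - T u g - (v-u) • T u y‖
          ≤ 2*C*‖g - fn n‖ + C * (v-u) * (C*(ee + ‖yn n - y‖) + ee) := by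
        intro n
        obtain ⟨hfnmem, _⟩ := hfn n
        have hid : T v g - T u g - (v-u) • T u y
            = ((T v g - T v (fn n)) - (T u g - T u (fn n)))
              + (T v (fn n) - T u (fn n) - (v-u) • T u y) := by abel
        rw [hid]
        have e1 : ‖T v g - T v (fn n)‖ ≤ C * ‖g - fn n‖ :=
          le_trans (hTdiff v hv0 g hg (fn n) hfnmem)
            (mul_le_mul_of_nonneg_right hMexpv (norm_nonneg _))
        have e2 : ‖T u g - T u (fn n)‖ ≤ C * ‖g - fn n‖ :=
          le_trans (hTdiff u hu g hg (fn n) hfnmem)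
            (mul_le_mul_of_nonneg_right hMexpu (norm_nonneg _))
        have e3 := (hclaim n).1
        calc ‖((T v g - T v (fn n)) - (T u g - T u (fn n)))
              + (T v (fn n) - T u (fn n) - (v-u) • T u y)‖
            ≤ ‖(T v g - T v (fn n)) - (T u g - T u (fn n))‖
              + ‖T v (fn n) - T u (fn n) - (v-u) • T u y‖ := norm_add_le _ _
          _ ≤ (‖T v g - T v (fn n)‖ + ‖T u g - T u (fn n)‖)
              + ‖T v (fn n) - T u (fn n) - (v-u) • T u y‖ := by
              exact add_le_add (norm_sub_le _ _) le_rfl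
          _ ≤ 2*C*‖g - fn n‖ + C * (v-u) * (C*(ee + ‖yn n - y‖) + ee) := by
              linarith
      have htend : Tendsto (fun n => 2*C*‖g - fn n‖ + C * (v-u) * (C*(ee + ‖yn n - y‖) + ee))
          atTop (𝓝 (2*C*0 + C * (v-u) * (C*(ee + 0) + ee))) := by
        have h1 : Tendsto (fun n => C*(ee + ‖yn n - y‖) + ee) atTop (𝓝 (C*(ee + 0) + ee)) :=
          (((hy0.const_add ee).const_mul C).add_const ee)
        exact (hg0.const_mul (2*C)).add (h1.const_mul (C * (v-u)))
      have hle := ge_of_tendsto htend (Eventually.of_forall hper)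
      refine le_trans hle ?_
      have hb1 : C*(C*(ee+0)+ee) ≤ ε := by
        nlinarith [mul_nonneg (mul_nonneg hC0.le hee0.le) (show (0:ℝ) ≤ 7*C - 1 by linarith)]
      calc 2*C*0 + C * (v-u) * (C*(ee + 0) + ee) = (v-u) * (C*(C*(ee+0)+ee)) := by ring
        _ ≤ (v-u) * ε := mul_le_mul_of_nonneg_left hb1 huv0
    · have hper : ∀ n, ‖T v g - T u g - (v-u) • T v y‖
          ≤ 2*C*‖g - fn n‖ + C * (v-u) * (C*(ee + ‖yn n - y‖ + ee) + C*ee) := by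
        intro n
        obtain ⟨hfnmem, _⟩ := hfn n
        have hid : T v g - T u g - (v-u) • T v y
            = ((T v g - T v (fn n)) - (T u g - T u (fn n)))
              + (T v (fn n) - T u (fn n) - (v-u) • T v y) := by abel
        rw [hid]
        have e1 : ‖T v g - T v (fn n)‖ ≤ C * ‖g - fn n‖ :=
          le_trans (hTdiff v hv0 g hg (fn n) hfnmem)
            (mul_le_mul_of_nonneg_right hMexpv (norm_nonneg _))
        have e2 : ‖T u g - T u (fn n)‖ ≤ C * ‖g - fn n‖ :=
          le_trans (hTdiff u hu g hg (fn n) hfnmem)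
            (mul_le_mul_of_nonneg_right hMexpu (norm_nonneg _))
        have e3 := (hclaim n).2
        calc ‖((T v g - T v (fn n)) - (T u g - T u (fn n)))
              + (T v (fn n) - T u (fn n) - (v-u) • T v y)‖
            ≤ ‖(T v g - T v (fn n)) - (T u g - T u (fn n))‖
              + ‖T v (fn n) - T u (fn n) - (v-u) • T v y‖ := norm_add_le _ _
          _ ≤ (‖T v g - T v (fn n)‖ + ‖T u g - T u (fn n)‖)
              + ‖T v (fn n) - T u (fn n) - (v-u) • T v y‖ := by
              exact add_le_add (norm_sub_le _ _) le_rfl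
          _ ≤ 2*C*‖g - fn n‖ + C * (v-u) * (C*(ee + ‖yn n - y‖ + ee) + C*ee) := by
              linarith
      have htend : Tendsto (fun n => 2*C*‖g - fn n‖ + C * (v-u) * (C*(ee + ‖yn n - y‖ + ee) + C*ee))
          atTop (𝓝 (2*C*0 + C * (v-u) * (C*(ee + 0 + ee) + C*ee))) := by
        have h1 : Tendsto (fun n => C*(ee + ‖yn n - y‖ + ee) + C*ee) atTop
            (𝓝 (C*(ee + 0 + ee) + C*ee)) :=
          ((((hy0.const_add ee).add_const ee).const_mul C).add_const (C*ee))
        exact (hg0.const_mul (2*C)).add (h1.const_mul (C * (v-u)))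
      have hle := ge_of_tendsto htend (Eventually.of_forall hper)
      refine le_trans hle ?_
      have hb1 : C*(C*(ee+0+ee)+C*ee) ≤ ε := by
        nlinarith [mul_nonneg (mul_nonneg hC0.le hC0.le) hee0.le]
      calc 2*C*0 + C * (v-u) * (C*(ee + 0 + ee) + C*ee) = (v-u) * (C*(C*(ee+0+ee)+C*ee)) := by ring
        _ ≤ (v-u) * ε := mul_le_mul_of_nonneg_left hb1 huv0
  -- part (b)
  have hTb : ∀ f ∈ closedSpan Φ, ∀ y : X, y ∈ closedSpan Φ →
      (∃ fn yn : ℕ → X,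
        (∀ n : ℕ, fn n ∈ closedSpan Φ ∧ DerivAtZero F (fn n) (yn n)) ∧
        Tendsto fn atTop (𝓝 f) ∧ Tendsto yn atTop (𝓝 y)) →
      ∀ s : ℝ, 0 ≤ s →
        HasDerivWithinAt (fun r => T r f) (T s y) (Set.Ici (0 : ℝ)) s := by
    intro f hf y hy hex s hs
    obtain ⟨fn, yn, hfn, hfnf, hyny⟩ := hex
    rw [hasDerivWithinAt_iff_tendsto_slope, Metric.tendsto_nhdsWithin_nhds]
    intro ε hε
    obtain ⟨δ₁, hδ₁0, hbody⟩ := hEST f hf y hy fn yn hfn hfnf hyny (s+1) (by linarith)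
      (ε/2) (by linarith)
    refine ⟨min δ₁ 1, lt_min hδ₁0 one_pos, ?_⟩
    intro r hr hdist
    have hr0 : (0:ℝ) ≤ r := hr.1
    have hrne : r ≠ s := by
      intro h; exact hr.2 (by simp [h])
    rw [Real.dist_eq] at hdist
    rw [dist_eq_norm]
    rcases lt_or_gt_of_ne hrne with hlt | hgt
    · -- r < s : use the second estimate with u = r, v = s
      have habs : |r - s| = s - r := by rw [abs_of_neg (by linarith)]; ring
      rw [habs] at hdist
      have h1 := (hbody r s hr0 hlt.le (by linarith)
        (le_trans hdist.le (min_le_left _ _))).2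
      have hsr : (0:ℝ) < s - r := by linarith
      have hflip : (r - s)⁻¹ • (T r f - T s f) = (s - r)⁻¹ • (T s f - T r f) := by
        rw [show r - s = -(s - r) by ring, inv_neg, neg_smul, ← smul_neg, neg_sub]
      have hsd : slope (fun r => T r f) s r = (r - s)⁻¹ • (T r f - T s f) := by
        rw [slope_def_module]
      have haux : (s-r)⁻¹ • (T s f - T r f - (s-r) • T s y)
          = (s-r)⁻¹ • (T s f - T r f) - T s y := by
        rw [smul_sub, smul_smul, inv_mul_cancel₀ hsr.ne', one_smul]
      have hslope : slope (fun r => T r f) s r - T s y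
          = (s - r)⁻¹ • (T s f - T r f - (s - r) • T s y) := by
        rw [hsd, hflip, haux]
      rw [hslope, norm_smul, Real.norm_eq_abs, abs_of_pos (inv_pos.2 hsr)]
      calc (s-r)⁻¹ * ‖T s f - T r f - (s - r) • T s y‖
          ≤ (s-r)⁻¹ * ((s - r) * (ε/2)) :=
            mul_le_mul_of_nonneg_left h1 (inv_pos.2 hsr).le
        _ = ε/2 := by field_simp
        _ < ε := by linarith
    · -- s < r : use the first estimate with u = s, v = r
      have habs : |r - s| = r - s := abs_of_pos (by linarith)
      rw [habs] at hdist
      have h1 := (hbody s r hs hgt.le (by linarith [min_le_right δ₁ 1])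
        (le_trans hdist.le (min_le_left _ _))).1
      have hsr : (0:ℝ) < r - s := by linarith
      have hsd : slope (fun r => T r f) s r = (r - s)⁻¹ • (T r f - T s f) := by
        rw [slope_def_module]
      have haux : (r-s)⁻¹ • (T r f - T s f - (r-s) • T s y)
          = (r-s)⁻¹ • (T r f - T s f) - T s y := by
        rw [smul_sub, smul_smul, inv_mul_cancel₀ hsr.ne', one_smul]
      have hslope : slope (fun r => T r f) s r - T s y
          = (r - s)⁻¹ • (T r f - T s f - (r - s) • T s y) := by
        rw [hsd, haux]
      rw [hslope, norm_smul, Real.norm_eq_abs, abs_of_pos (inv_pos.2 hsr)]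
      calc (r-s)⁻¹ * ‖T r f - T s f - (r - s) • T s y‖
          ≤ (r-s)⁻¹ * ((r - s) * (ε/2)) :=
            mul_le_mul_of_nonneg_left h1 (inv_pos.2 hsr).le
        _ = ε/2 := by field_simp
        _ < ε := by linarith
  refine ⟨hTa, hTb, ?_⟩
  -- part (c)
  intro f hf yf hderiv hyf s hs hTsf y' hy' hex
  obtain ⟨fn, yn, hfn, hfnT, hyny⟩ := hex
  have Hb : HasDerivWithinAt (fun r => T r f) (T s yf) (Set.Ici (0:ℝ)) s :=
    hTb f hf yf hyf ⟨fun _ => f, fun _ => yf, fun _ => ⟨hf, hderiv⟩,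
      tendsto_const_nhds, tendsto_const_nhds⟩ s hs
  have Hright : Tendsto (slope (fun r => T r f) s) (𝓝[>] s) (𝓝 y') := by
    rw [Metric.tendsto_nhdsWithin_nhds]
    intro ε hε
    obtain ⟨δ₁, hδ₁0, hbody⟩ := hEST (T s f) hTsf y' hy' fn yn hfn hfnT hyny 1
      zero_le_one (ε/2) (by linarith)
    refine ⟨min δ₁ 1, lt_min hδ₁0 one_pos, ?_⟩
    intro r hr hdist
    have hrs : s < r := hr
    rw [Real.dist_eq] at hdist
    rw [dist_eq_norm]
    have habs : |r - s| = r - s := abs_of_pos (by linarith)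
    rw [habs] at hdist
    have h1 := (hbody 0 (r-s) le_rfl (by linarith)
      (by linarith [min_le_right δ₁ 1])
      (by simpa using le_trans hdist.le (min_le_left _ _))).1
    simp only [sub_zero] at h1
    rw [hT0 (T s f) hTsf, hT0 y' hy'] at h1
    have hTr : T (r-s) (T s f) = T r f := by
      have h2 := hTa f hf s hs hTsf (r-s) (by linarith)
      rw [show s + (r - s) = r by ring] at h2
      exact h2.symm
    rw [hTr] at h1
    have hsr : (0:ℝ) < r - s := by linarith
    have hsd : slope (fun r => T r f) s r = (r - s)⁻¹ • (T r f - T s f) := by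
      rw [slope_def_module]
    have haux : (r-s)⁻¹ • (T r f - T s f - (r-s) • y')
        = (r-s)⁻¹ • (T r f - T s f) - y' := by
      rw [smul_sub, smul_smul, inv_mul_cancel₀ hsr.ne', one_smul]
    have hslope : slope (fun r => T r f) s r - y'
        = (r - s)⁻¹ • (T r f - T s f - (r - s) • y') := by
      rw [hsd, haux]
    rw [hslope, norm_smul, Real.norm_eq_abs, abs_of_pos (inv_pos.2 hsr)]
    calc (r-s)⁻¹ * ‖T r f - T s f - (r - s) • y'‖
        ≤ (r-s)⁻¹ * ((r - s) * (ε/2)) :=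
          mul_le_mul_of_nonneg_left h1 (inv_pos.2 hsr).le
      _ = ε/2 := by field_simp
      _ < ε := by linarith
  have HbR : Tendsto (slope (fun r => T r f) s) (𝓝[>] s) (𝓝 (T s yf)) := by
    have h := hasDerivWithinAt_iff_tendsto_slope.1 Hb
    refine h.mono_left (nhdsWithin_mono s ?_)
    intro x hx
    have hx' : s < x := hx
    exact ⟨le_trans hs hx'.le, by simp [ne_of_gt hx']⟩
  have hkeyeq : T s yf = y' := tendsto_nhds_unique HbR Hright
  rw [← hkeyeq]
  exact Hb
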